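/- Let A be an invertible square matrix over a field with acyclic support (the off-diagonal support extends to a strict partial order and all diagonal entries are nonzero). Then the transitive closures of Supp(A) and Supp(A⁻¹) are equal. -/

import Mathlib

open Polynomial Matrix

section Aux

variable {k I : Type*} [Field k] [Fintype I] [DecidableEq I]

/-- A nonzero entry of a power of `M` gives a path in the support of `M`. -/
lemma pow_entry_path (M : Matrix I I k) :
    ∀ (n : ℕ) (i j : I), (M ^ n) i j ≠ 0 →
      Relation.ReflTransGen (fun a b => M a b ≠ 0) i j := by
  intro n
  induction n with
  | zero =>
    intro i j h
    simp only [pow_zero] at h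
    by_cases hij : i = j
    · subst hij; exact Relation.ReflTransGen.refl
    · exact absurd (Matrix.one_apply_ne hij) h
  | succ n ih =>
    intro i j h
    rw [pow_succ, Matrix.mul_apply] at h
    obtain ⟨l, -, hl⟩ := Finset.exists_ne_zero_of_sum_ne_zero h
    exact (ih i l (left_ne_zero_of_mul hl)).tail (right_ne_zero_of_mul hl)

/-- The inverse of a matrix is a scalar multiple of a polynomial in the matrix. -/
lemma inv_eq_poly (A : Matrix I I k) (hA : IsUnit A) :
    ∃ (c : k) (q : k[X]), A⁻¹ = c • (aeval A q : Matrix I I k) := by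
  have hdet : IsUnit A.det := (Matrix.isUnit_iff_isUnit_det A).mp hA
  set P := A.charpoly with hP
  have hc0 : P.coeff 0 ≠ 0 := by
    intro h
    have := Matrix.det_eq_sign_charpoly_coeff A
    rw [← hP, h, mul_zero] at this
    exact hdet.ne_zero this
  refine ⟨-(P.coeff 0)⁻¹, P.divX, ?_⟩
  apply Matrix.inv_eq_left_inv
  have hCH : (aeval A P : Matrix I I k) = 0 := Matrix.aeval_self_charpoly A
  have hsplit : P.divX * X + C (P.coeff 0) = P := Polynomial.divX_mul_X_add P
  have h2 : (aeval A P.divX : Matrix I I k) * A + (P.coeff 0) • 1 = 0 := by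
    have := congrArg (fun p => (aeval A p : Matrix I I k)) hsplit
    simp only [map_add, _root_.map_mul, aeval_X, aeval_C, hCH,
      Algebra.algebraMap_eq_smul_one] at this
    exact this
  have h3 : (aeval A P.divX : Matrix I I k) * A = -((P.coeff 0) • 1) :=
    eq_neg_of_add_eq_zero_left h2
  rw [smul_mul_assoc, h3, neg_smul, smul_neg, neg_neg, smul_smul,
    inv_mul_cancel₀ hc0, one_smul]

/-- Nonzero entries of the inverse give paths in the support of `A`,
provided the diagonal of `A` is nonzero. -/
lemma inv_support_sub (A : Matrix I I k) (hA : IsUnit A)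
    (hdiag : ∀ i : I, A i i ≠ 0) (i j : I) (h : A⁻¹ i j ≠ 0) :
    Relation.TransGen (fun a b => A a b ≠ 0) i j := by
  obtain ⟨c, q, hq⟩ := inv_eq_poly A hA
  rw [hq] at h
  rw [Polynomial.aeval_eq_sum_range] at h
  have h' : (∑ m ∈ Finset.range (q.natDegree + 1), q.coeff m • A ^ m) i j ≠ 0 := by
    intro h0
    apply h
    simp only [Matrix.smul_apply, Matrix.sum_apply] at h0 ⊢
    rw [h0, smul_zero]
  rw [Matrix.sum_apply] at h'
  obtain ⟨m, -, hm⟩ := Finset.exists_ne_zero_of_sum_ne_zero h'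
  have hpow : (A ^ m) i j ≠ 0 := by
    intro h0; apply hm; simp [h0]
  have hpath := pow_entry_path A m i j hpow
  rcases (Relation.reflTransGen_iff_eq_or_transGen.mp hpath) with heq | ht
  · subst heq; exact Relation.TransGen.single (hdiag _)
  · exact ht

/-- A matrix with acyclic off-diagonal support has determinant equal to the
product of its diagonal entries. -/
lemma det_acyclic (M : Matrix I I k)
    (hacyc : ∀ i : I, ¬ Relation.TransGen (fun a b => a ≠ b ∧ M a b ≠ 0) i i) :
    M.det = ∏ i, M i i := by
  have key : ∀ σ : Equiv.Perm I, σ ≠ 1 → (∏ l, M (σ l) l) = 0 := by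
    intro σ hσ
    have : ∃ i, M (σ i) i = 0 := by
      by_contra hall
      push_neg at hall
      obtain ⟨i, hi⟩ : ∃ i, σ i ≠ i := by
        by_contra hfix
        push_neg at hfix
        exact hσ (Equiv.ext hfix)
      -- each point in the orbit of i is moved by σ
      have hmove : ∀ n : ℕ, σ ((σ⁻¹ : Equiv.Perm I) ^ n • i) ≠ (σ⁻¹ : Equiv.Perm I) ^ n • i := by
        intro n h
        apply hi
        have : ((σ⁻¹ : Equiv.Perm I) ^ n)⁻¹ • (σ • ((σ⁻¹ : Equiv.Perm I) ^ n • i))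
            = ((σ⁻¹ : Equiv.Perm I) ^ n)⁻¹ • ((σ⁻¹ : Equiv.Perm I) ^ n • i) := by
          rw [show σ • ((σ⁻¹:Equiv.Perm I) ^ n • i) = σ ((σ⁻¹:Equiv.Perm I) ^ n • i) from rfl, h]
        simp only [inv_smul_smul] at this
        rw [← SemigroupAction.mul_smul, ← SemigroupAction.mul_smul] at this
        have hcomm : ((σ⁻¹ : Equiv.Perm I) ^ n)⁻¹ * σ * (σ⁻¹ : Equiv.Perm I) ^ n = σ := by
          rw [inv_pow, inv_inv]
          group
        rw [hcomm] at this
        simpa using this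
      have hchain : ∀ n : ℕ, 0 < n →
          Relation.TransGen (fun a b => a ≠ b ∧ M a b ≠ 0) i ((σ⁻¹ : Equiv.Perm I) ^ n • i) := by
        intro n hn
        induction n with
        | zero => omega
        | succ m ihm =>
          have hstep : (fun a b => a ≠ b ∧ M a b ≠ 0)
              ((σ⁻¹ : Equiv.Perm I) ^ m • i) ((σ⁻¹ : Equiv.Perm I) ^ (m+1) • i) := by
            have hx : σ ((σ⁻¹ : Equiv.Perm I) ^ (m+1) • i) = (σ⁻¹ : Equiv.Perm I) ^ m • i := by
              have : σ • ((σ⁻¹ : Equiv.Perm I) ^ (m+1) • i) = (σ⁻¹ : Equiv.Perm I) ^ m • i := by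
                rw [← SemigroupAction.mul_smul, pow_succ', ← mul_assoc]
                simp
              exact this
            constructor
            · intro h
              exact hmove (m+1) (by rw [hx, h])
            · rw [← hx]; exact hall _
          rcases Nat.eq_zero_or_pos m with hm0 | hm0
          · subst hm0
            apply Relation.TransGen.single
            simpa using hstep
          · exact (ihm hm0).tail hstep
      have horder : (σ⁻¹ : Equiv.Perm I) ^ orderOf (σ⁻¹ : Equiv.Perm I) • i = i := by
        rw [pow_orderOf_eq_one]; simp
      have hpos : 0 < orderOf (σ⁻¹ : Equiv.Perm I) := orderOf_pos _
      have := hchain _ hpos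
      rw [horder] at this
      exact hacyc i this
    obtain ⟨i, hi⟩ := this
    exact Finset.prod_eq_zero (Finset.mem_univ i) hi
  rw [Matrix.det_apply,
    Finset.sum_eq_single (1 : Equiv.Perm I)
      (fun σ _ hσ => by rw [key σ hσ, smul_zero])
      (fun h => absurd (Finset.mem_univ _) h)]
  simp

/-- Under the hypotheses, the diagonal of the inverse is nonzero. -/
lemma inv_diag_ne_zero (A : Matrix I I k) (hA : IsUnit A)
    (hdiag : ∀ i : I, A i i ≠ 0)
    (hacyc : ∀ i : I, ¬ Relation.TransGen (fun a b => a ≠ b ∧ A a b ≠ 0) i i)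
    (i : I) : A⁻¹ i i ≠ 0 := by
  have hdet : IsUnit A.det := (Matrix.isUnit_iff_isUnit_det A).mp hA
  rw [Matrix.inv_def, Ring.inverse_eq_inv, Matrix.smul_apply, Matrix.adjugate_apply]
  set M := A.updateRow i (Pi.single i 1) with hM
  have hMoff : ∀ a b, a ≠ b → M a b ≠ 0 → A a b ≠ 0 := by
    intro a b hab hMab
    by_cases ha : a = i
    · subst ha
      rw [hM, Matrix.updateRow_self] at hMab
      exact absurd (Pi.single_eq_of_ne (Ne.symm hab) 1) hMab
    · rwa [hM, Matrix.updateRow_ne ha] at hMab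
  have hMacyc : ∀ a, ¬ Relation.TransGen (fun x y => x ≠ y ∧ M x y ≠ 0) a a := by
    intro a ha
    apply hacyc a
    exact Relation.TransGen.mono (p := fun a b => a ≠ b ∧ A a b ≠ 0) (fun x y hxy => ⟨hxy.1, hMoff x y hxy.1 hxy.2⟩) _ _ ha
  have hMdet : M.det = ∏ l, M l l := det_acyclic M hMacyc
  have hMdiag : ∀ l, M l l ≠ 0 := by
    intro l
    by_cases hl : l = i
    · subst hl; rw [hM, Matrix.updateRow_self, Pi.single_eq_same]; exact one_ne_zero
    · rw [hM, Matrix.updateRow_ne hl]; exact hdiag l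
  have : M.det ≠ 0 := by
    rw [hMdet]; exact Finset.prod_ne_zero_iff.mpr fun l _ => hMdiag l
  simp only [smul_eq_mul]
  exact mul_ne_zero (inv_ne_zero hdet.ne_zero) this

end Aux

theorem stmt13 {k I : Type*} [Field k] [Fintype I] [DecidableEq I]
    (A : Matrix I I k) (hA : IsUnit A)
    (hdiag : ∀ i : I, A i i ≠ 0)
    (hacyc : ∀ i : I, ¬ Relation.TransGen (fun a b => a ≠ b ∧ A a b ≠ 0) i i) :
    Relation.TransGen (fun i j => A i j ≠ 0) =
      Relation.TransGen (fun i j => A⁻¹ i j ≠ 0) := by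
  have hdet : IsUnit A.det := (Matrix.isUnit_iff_isUnit_det A).mp hA
  have hAinv_unit : IsUnit (A⁻¹) := by
    rw [Matrix.isUnit_iff_isUnit_det, Matrix.det_nonsing_inv, Ring.inverse_eq_inv]
    exact isUnit_iff_ne_zero.mpr (inv_ne_zero hdet.ne_zero)
  have hAinvinv : A⁻¹⁻¹ = A := Matrix.nonsing_inv_nonsing_inv A hdet
  have hAinvdiag : ∀ i, A⁻¹ i i ≠ 0 := inv_diag_ne_zero A hA hdiag hacyc
  funext i j
  apply propext
  constructor
  · intro h
    have := Relation.TransGen.mono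
      (p := Relation.TransGen fun a b => A⁻¹ a b ≠ 0)
      (fun a b hab => inv_support_sub A⁻¹ hAinv_unit hAinvdiag a b (hAinvinv.symm ▸ hab)) _ _ h
    rwa [Relation.transGen_idem] at this
  · intro h
    have := Relation.TransGen.mono
      (p := Relation.TransGen fun a b => A a b ≠ 0)
      (fun a b hab => inv_support_sub A hA hdiag a b hab) _ _ h
    rwa [Relation.transGen_idem] at this
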